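/- arXiv:2106.00087 — 3 statements merged into one kernel-verified Lean document; each statement's English description precedes it below -/
import Mathlib

section
/- If Z ~ Gamma(α₁+α₂, β) and U ~ Beta(α₁, α₂) are independent, then X = UZ and Y = (1-U)Z are independent with X ~ Gamma(α₁, β) and Y ~ Gamma(α₂, β). -/
open MeasureTheory ProbabilityTheory
open scoped ENNReal NNReal

/-- The Beta(a,b) probability density on (0,1). -/
noncomputable def betaPDFReal (a b x : ℝ) : ℝ :=
  if 0 < x ∧ x < 1 then
    Real.Gamma (a + b) / (Real.Gamma a * Real.Gamma b) * x ^ (a - 1) * (1 - x) ^ (b - 1)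
  else 0

/-- The Beta(a,b) distribution on ℝ. -/
noncomputable def betaMeasure (a b : ℝ) : Measure ℝ :=
  volume.withDensity fun x => ENNReal.ofReal (_root_.betaPDFReal a b x)

lemma _root_.measurable_betaPDFReal (a b : ℝ) : Measurable (_root_.betaPDFReal a b) := by
  unfold _root_.betaPDFReal
  refine Measurable.ite ?_ ?_ measurable_const
  · exact measurableSet_Ioo
  · fun_prop

lemma real_id {α₁ α₂ β : ℝ} (hα₁ : 0 < α₁) (hα₂ : 0 < α₂) (hβ : 0 < β)
    {z u : ℝ} (hz : 0 < z) (hu : 0 < u) (hu1 : u < 1) :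
    z * (gammaPDFReal α₁ β (z*u) * gammaPDFReal α₂ β (z - z*u))
      = gammaPDFReal (α₁+α₂) β z * _root_.betaPDFReal α₁ α₂ u := by
  have h1u : 0 < 1 - u := by linarith
  have hzu : 0 < z*u := mul_pos hz hu
  have hz2 : 0 < z - z*u := by nlinarith
  have hG1 := Real.Gamma_pos_of_pos hα₁
  have hG2 := Real.Gamma_pos_of_pos hα₂
  have hG12 := Real.Gamma_pos_of_pos (add_pos hα₁ hα₂)
  rw [gammaPDFReal, gammaPDFReal, gammaPDFReal, _root_.betaPDFReal, if_pos hzu.le, if_pos hz2.le,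
    if_pos hz.le, if_pos ⟨hu, hu1⟩]
  have hsub : z - z*u = z*(1-u) := by ring
  rw [hsub, Real.mul_rpow hz.le hu.le, Real.mul_rpow hz.le h1u.le, Real.rpow_add hβ]
  have hzpow : z ^ (α₁+α₂-1) = z ^ (α₁-1) * z ^ (α₂-1) * z := by
    have h : α₁+α₂-1 = (α₁-1)+((α₂-1)+1) := by ring
    rw [h, Real.rpow_add hz, Real.rpow_add hz, Real.rpow_one]; ring
  have hexp : Real.exp (-(β*(z*u))) * Real.exp (-(β*(z*(1-u)))) = Real.exp (-(β*z)) := by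
    rw [← Real.exp_add]; congr 1; ring
  rw [hzpow]
  field_simp
  rw [← Real.exp_add]; congr 1
  ring

lemma betaPDFReal_of_not_mem {a b u : ℝ} (h : ¬ (0 < u ∧ u < 1)) : _root_.betaPDFReal a b u = 0 := by
  rw [_root_.betaPDFReal, if_neg h]

lemma point_id {α₁ α₂ β : ℝ} (hα₁ : 0 < α₁) (hα₂ : 0 < α₂) (hβ : 0 < β)
    {z u : ℝ} (hz : 0 < z) (hu0 : u ≠ 0) (hu1 : u ≠ 1) :
    ENNReal.ofReal z * (gammaPDF α₁ β (z*u) * gammaPDF α₂ β (z - z*u))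
      = gammaPDF (α₁+α₂) β z * ENNReal.ofReal (_root_.betaPDFReal α₁ α₂ u) := by
  rcases lt_trichotomy u 0 with h | h | h
  · rw [gammaPDF_of_neg (by nlinarith : z*u < 0),
      betaPDFReal_of_not_mem (by intro hc; exact absurd hc.1 (not_lt.mpr h.le))]
    simp
  · exact absurd h hu0
  rcases lt_trichotomy u 1 with h1 | h1 | h1
  · rw [gammaPDF, gammaPDF, gammaPDF,
      ← ENNReal.ofReal_mul (gammaPDFReal_nonneg hα₁ hβ _),
      ← ENNReal.ofReal_mul hz.le,
      ← ENNReal.ofReal_mul (gammaPDFReal_nonneg (add_pos hα₁ hα₂) hβ _)]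
    exact congrArg ENNReal.ofReal (real_id hα₁ hα₂ hβ hz h h1)
  · exact absurd h1 hu1
  · rw [gammaPDF_of_neg (by nlinarith : z - z*u < 0),
      betaPDFReal_of_not_mem (by intro hc; exact absurd hc.2 (not_lt.mpr h1.le))]
    simp

lemma map_gammaBeta {α₁ α₂ β : ℝ} (hα₁ : 0 < α₁) (hα₂ : 0 < α₂) (hβ : 0 < β) :
    Measure.map (fun p : ℝ × ℝ => (p.2 * p.1, (1 - p.2) * p.1))
        ((gammaMeasure (α₁+α₂) β).prod (_root_.betaMeasure α₁ α₂))
      = (gammaMeasure α₁ β).prod (gammaMeasure α₂ β) := by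
  set φ : ℝ × ℝ → ℝ × ℝ := fun p => (p.2 * p.1, (1 - p.2) * p.1) with hφdef
  have hφ : Measurable φ := by fun_prop
  set g₁ := gammaPDF α₁ β with hg₁def
  set g₂ := gammaPDF α₂ β with hg₂def
  set γ := gammaPDF (α₁+α₂) β with hγdef
  set hb : ℝ → ℝ≥0∞ := fun u => ENNReal.ofReal (_root_.betaPDFReal α₁ α₂ u) with hbdef
  have hg₁m : Measurable g₁ := (measurable_gammaPDFReal _ _).ennreal_ofReal
  have hg₂m : Measurable g₂ := (measurable_gammaPDFReal _ _).ennreal_ofReal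
  have hγm : Measurable γ := (measurable_gammaPDFReal _ _).ennreal_ofReal
  have hbm : Measurable hb := (_root_.measurable_betaPDFReal _ _).ennreal_ofReal
  haveI : IsProbabilityMeasure (gammaMeasure α₂ β) := isProbabilityMeasure_gammaMeasure hα₂ hβ
  haveI : SFinite (_root_.betaMeasure α₁ α₂) := by unfold _root_.betaMeasure; infer_instance
  ext s hs
  have hsφ : MeasurableSet (φ ⁻¹' s) := hφ hs
  rw [Measure.map_apply hφ hs, Measure.prod_apply hsφ, Measure.prod_apply hs]
  simp only [gammaMeasure, _root_.betaMeasure]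
  rw [lintegral_withDensity_eq_lintegral_mul volume hγm
      (measurable_measure_prodMk_left (ν := volume.withDensity fun u => ENNReal.ofReal (_root_.betaPDFReal α₁ α₂ u)) hsφ),
    lintegral_withDensity_eq_lintegral_mul volume hg₁m
      (measurable_measure_prodMk_left (ν := volume.withDensity (gammaPDF α₂ β)) hs)]
  simp only [Pi.mul_apply]
  have hbeta : ∀ z : ℝ, (volume.withDensity fun u => ENNReal.ofReal (_root_.betaPDFReal α₁ α₂ u))
      (Prod.mk z ⁻¹' (φ ⁻¹' s)) = ∫⁻ u, (Prod.mk z ⁻¹' (φ ⁻¹' s)).indicator hb u := fun z => by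
    rw [withDensity_apply _ (measurable_prodMk_left hsφ),
      ← lintegral_indicator (measurable_prodMk_left hsφ)]
  have hgam2 : ∀ x : ℝ, (volume.withDensity (gammaPDF α₂ β)) (Prod.mk x ⁻¹' s)
      = ∫⁻ y, (Prod.mk x ⁻¹' s).indicator g₂ y := fun x => by
    rw [withDensity_apply _ (measurable_prodMk_left hs),
      ← lintegral_indicator (measurable_prodMk_left hs)]
  simp_rw [hbeta, hgam2]
  -- the joint density on the target side
  set E : ℝ × ℝ → ℝ≥0∞ := s.indicator fun p => g₁ p.1 * g₂ p.2 with hEdef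
  have hEm : Measurable E :=
    ((hg₁m.comp measurable_fst).mul (hg₂m.comp measurable_snd)).indicator hs
  have step0 : ∀ x : ℝ, g₁ x * ∫⁻ y, (Prod.mk x ⁻¹' s).indicator g₂ y = ∫⁻ y, E (x, y) := by
    intro x
    rw [← lintegral_const_mul' (g₁ x) _ (by rw [hg₁def, gammaPDF]; exact ENNReal.ofReal_ne_top)]
    refine lintegral_congr fun y => ?_
    by_cases hxy : (x, y) ∈ s
    · rw [hEdef, Set.indicator_of_mem hxy, Set.indicator_of_mem (Set.mem_preimage.mpr hxy)]
    · rw [hEdef, Set.indicator_of_notMem hxy,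
        Set.indicator_of_notMem (fun hc => hxy (Set.mem_preimage.mp hc)), mul_zero]
  have step1 : ∀ x : ℝ, (∫⁻ y, E (x, y)) = ∫⁻ z, E (x, z - x) := by
    intro x
    simpa using lintegral_add_right_eq_self (μ := volume) (fun z => E (x, z - x)) x
  have step2 : (∫⁻ x, ∫⁻ z, E (x, z - x)) = ∫⁻ z, ∫⁻ x, E (x, z - x) :=
    lintegral_lintegral_swap
      ((hEm.comp (measurable_fst.prodMk (measurable_snd.sub measurable_fst))).aemeasurable)
  have hz_ae : ∀ᵐ z : ℝ, z ≠ 0 := by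
    rw [ae_iff]
    have h0 : {a : ℝ | ¬a ≠ 0} = {0} := by ext a; simp
    rw [h0]
    exact measure_singleton 0
  have hone_ae : ∀ᵐ u : ℝ, u ≠ 1 := by
    rw [ae_iff]
    have h0 : {a : ℝ | ¬a ≠ 1} = {1} := by ext a; simp
    rw [h0]
    exact measure_singleton 1
  have hu_ae : ∀ᵐ u : ℝ, u ≠ 0 ∧ u ≠ 1 := hz_ae.and hone_ae
  have step3 : (∫⁻ z, ∫⁻ x, E (x, z - x))
      = ∫⁻ z, γ z * ∫⁻ u, (Prod.mk z ⁻¹' (φ ⁻¹' s)).indicator hb u := by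
    refine lintegral_congr_ae ?_
    filter_upwards [hz_ae] with z hz0
    rcases lt_or_gt_of_ne hz0 with hz | hz
    · have hL : ∀ x : ℝ, E (x, z - x) = 0 := by
        intro x
        rcases lt_or_ge x 0 with hx | hx
        · by_cases hxy : (x, z - x) ∈ s
          · rw [hEdef, Set.indicator_of_mem hxy, hg₁def, gammaPDF_of_neg hx, zero_mul]
          · rw [hEdef, Set.indicator_of_notMem hxy]
        · by_cases hxy : (x, z - x) ∈ s
          · rw [hEdef, Set.indicator_of_mem hxy, hg₂def,
              gammaPDF_of_neg (by linarith : z - x < 0), mul_zero]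
          · rw [hEdef, Set.indicator_of_notMem hxy]
      simp only [hL, lintegral_zero, hγdef, gammaPDF_of_neg hz, zero_mul]
    · have hK : Measurable fun x : ℝ => E (x, z - x) :=
        hEm.comp (measurable_id.prodMk (measurable_const.sub measurable_id))
      have scale : (∫⁻ x, E (x, z - x)) = ENNReal.ofReal z * ∫⁻ u, E (z * u, z - z * u) := by
        have hmap : (∫⁻ u, E (z * u, z - z * u) ∂volume)
            = ∫⁻ x, E (x, z - x) ∂(Measure.map (fun u => z * u) volume) :=
          (lintegral_map hK (measurable_id.const_mul z)).symm
        rw [hmap, Real.map_volume_mul_left hz.ne', lintegral_smul_measure, abs_inv,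
          abs_of_pos hz, smul_eq_mul, ← mul_assoc, ← ENNReal.ofReal_mul hz.le, mul_inv_cancel₀ hz.ne',
          ENNReal.ofReal_one, one_mul]
      rw [scale, ← lintegral_const_mul' (ENNReal.ofReal z) _ ENNReal.ofReal_ne_top,
        ← lintegral_const_mul' (γ z) _ (by rw [hγdef, gammaPDF]; exact ENNReal.ofReal_ne_top)]
      refine lintegral_congr_ae ?_
      filter_upwards [hu_ae] with u hu01
      obtain ⟨hu0, hu1⟩ := hu01
      have hpair : φ (z, u) = (z * u, z - z * u) := by
        simp only [hφdef]
        rw [Prod.mk.injEq]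
        constructor <;> ring
      by_cases hmem : (z * u, z - z * u) ∈ s
      · have hmem' : u ∈ Prod.mk z ⁻¹' (φ ⁻¹' s) := by
          simp only [Set.mem_preimage]
          rw [show φ (z, u) = (z * u, z - z * u) from hpair]
          exact hmem
        rw [Set.indicator_of_mem hmem', hEdef, Set.indicator_of_mem hmem]
        exact point_id hα₁ hα₂ hβ hz hu0 hu1
      · have hmem' : u ∉ Prod.mk z ⁻¹' (φ ⁻¹' s) := by
          simp only [Set.mem_preimage]
          rw [show φ (z, u) = (z * u, z - z * u) from hpair]
          exact hmem
        rw [Set.indicator_of_notMem hmem', hEdef, Set.indicator_of_notMem hmem,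
          mul_zero, mul_zero]
    -- note: γ z * ∫ = ∫ γ z * ... handled by lintegral_const_mul' above
  calc ∫⁻ z, γ z * ∫⁻ u, (Prod.mk z ⁻¹' (φ ⁻¹' s)).indicator hb u
      = ∫⁻ z, ∫⁻ x, E (x, z - x) := step3.symm
    _ = ∫⁻ x, ∫⁻ z, E (x, z - x) := step2.symm
    _ = ∫⁻ x, ∫⁻ y, E (x, y) := by exact lintegral_congr fun x => (step1 x).symm
    _ = ∫⁻ x, g₁ x * ∫⁻ y, (Prod.mk x ⁻¹' s).indicator g₂ y := lintegral_congr fun x => (step0 x).symm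
theorem gamma_beta_product_indep
    {Ω : Type*} [MeasurableSpace Ω] (P : Measure Ω) [IsProbabilityMeasure P]
    (α₁ α₂ β : ℝ) (hα₁ : 0 < α₁) (hα₂ : 0 < α₂) (hβ : 0 < β)
    (Z U : Ω → ℝ) (hZ : Measurable Z) (hU : Measurable U)
    (hZU : IndepFun Z U P)
    (hZlaw : Measure.map Z P = gammaMeasure (α₁ + α₂) β)
    (hUlaw : Measure.map U P = _root_.betaMeasure α₁ α₂) :
    IndepFun (fun ω => U ω * Z ω) (fun ω => (1 - U ω) * Z ω) P ∧
    Measure.map (fun ω => U ω * Z ω) P = gammaMeasure α₁ β ∧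
    Measure.map (fun ω => (1 - U ω) * Z ω) P = gammaMeasure α₂ β := by
  have hpairm : Measurable fun ω => (Z ω, U ω) := hZ.prodMk hU
  have hpair : Measure.map (fun ω => (Z ω, U ω)) P
      = (gammaMeasure (α₁ + α₂) β).prod (_root_.betaMeasure α₁ α₂) := by
    rw [← hZlaw, ← hUlaw]
    exact (indepFun_iff_map_prod_eq_prod_map_map hZ.aemeasurable hU.aemeasurable).mp hZU
  have hφ : Measurable fun p : ℝ × ℝ => (p.2 * p.1, (1 - p.2) * p.1) := by fun_prop
  have hXY : Measure.map (fun ω => (U ω * Z ω, (1 - U ω) * Z ω)) P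
      = (gammaMeasure α₁ β).prod (gammaMeasure α₂ β) := by
    have hc : (fun ω => (U ω * Z ω, (1 - U ω) * Z ω))
        = (fun p : ℝ × ℝ => (p.2 * p.1, (1 - p.2) * p.1)) ∘ fun ω => (Z ω, U ω) := rfl
    rw [hc, ← Measure.map_map hφ hpairm, hpair, map_gammaBeta hα₁ hα₂ hβ]
  haveI h1 : IsProbabilityMeasure (gammaMeasure α₁ β) := isProbabilityMeasure_gammaMeasure hα₁ hβ
  haveI h2 : IsProbabilityMeasure (gammaMeasure α₂ β) := isProbabilityMeasure_gammaMeasure hα₂ hβ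
  have hXm : Measurable fun ω => U ω * Z ω := hU.mul hZ
  have hYm : Measurable fun ω => (1 - U ω) * Z ω := (measurable_const.sub hU).mul hZ
  have hX : Measure.map (fun ω => U ω * Z ω) P = gammaMeasure α₁ β := by
    have hc : (fun ω => U ω * Z ω)
        = Prod.fst ∘ fun ω => (U ω * Z ω, (1 - U ω) * Z ω) := rfl
    rw [hc, ← Measure.map_map measurable_fst (hXm.prodMk hYm), hXY,
      Measure.map_fst_prod, measure_univ, one_smul]
  have hY : Measure.map (fun ω => (1 - U ω) * Z ω) P = gammaMeasure α₂ β := by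
    have hc : (fun ω => (1 - U ω) * Z ω)
        = Prod.snd ∘ fun ω => (U ω * Z ω, (1 - U ω) * Z ω) := rfl
    rw [hc, ← Measure.map_map measurable_snd (hXm.prodMk hYm), hXY,
      Measure.map_snd_prod, measure_univ, one_smul]
  refine ⟨?_, hX, hY⟩
  rw [indepFun_iff_map_prod_eq_prod_map_map hXm.aemeasurable hYm.aemeasurable, hXY, hX, hY]
end

section
/- For λ > 0 and s, t ∈ ℝ, the sets G_t = {(x,y) : x ∈ ℝ, 0 ≤ y < λ e^{-2λ|t-x|}} satisfy: each G_t has Lebesgue area 1, and the intersection G_s ∩ G_t has Lebesgue area e^{-λ|s-t|}. -/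
open MeasureTheory Set Real Filter

lemma expIoi {b : ℝ} (hb : 0 < b) (c : ℝ) :
    IntegrableOn (fun x => Real.exp (-(b*x))) (Ioi c) ∧
    ∫ x in Ioi c, Real.exp (-(b*x)) = Real.exp (-(b*c)) / b := by
  have hderiv : ∀ x ∈ Ici c, HasDerivAt (fun x => -(1/b) * Real.exp (-(b*x)))
      (Real.exp (-(b*x))) x := by
    intro x _
    have h1 : HasDerivAt (fun x : ℝ => -(b*x)) (-b) x := by
      have h := ((hasDerivAt_id x).const_mul b).neg
      simp only [id, mul_one] at h
      exact h
    have h2 := (Real.hasDerivAt_exp (-(b*x))).comp x h1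
    have h3 := h2.const_mul (-(1/b))
    refine h3.congr_deriv ?_
    field_simp [hb.ne']
  have htop : Tendsto (fun x => -(1/b) * Real.exp (-(b*x))) atTop (nhds 0) := by
    have h1 : Tendsto (fun x : ℝ => -(b*x)) atTop atBot := by
      have := (tendsto_const_mul_atTop_of_pos hb).2 tendsto_id
      exact tendsto_neg_atTop_atBot.comp this
    have h2 := Real.tendsto_exp_atBot.comp h1
    simpa using h2.const_mul (-(1/b))
  have hpos : ∀ x ∈ Ioi c, 0 ≤ Real.exp (-(b*x)) := fun x _ => (Real.exp_pos _).le
  constructor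
  · exact integrableOn_Ioi_deriv_of_nonneg' hderiv hpos htop
  · have := integral_Ioi_of_hasDerivAt_of_nonneg' hderiv hpos htop
    rw [this]; ring

lemma expIic {b : ℝ} (hb : 0 < b) (c : ℝ) :
    IntegrableOn (fun x => Real.exp (b*x)) (Iic c) ∧
    ∫ x in Iic c, Real.exp (b*x) = Real.exp (b*c) / b := by
  obtain ⟨hint, hval⟩ := expIoi hb (-c)
  constructor
  · have h1 : Integrable ((Ioi (-c)).indicator (fun x => Real.exp (-(b*x)))) := by
      rwa [← integrable_indicator_iff measurableSet_Ioi] at hint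
    have h2 := h1.comp_neg
    have h3 : (fun x => (Ioi (-c)).indicator (fun x => Real.exp (-(b*x))) (-x))
        = (Iio c).indicator (fun x => Real.exp (b*x)) := by
      funext x
      by_cases hx : x < c
      · simp only [Set.indicator_apply, Set.mem_Ioi, Set.mem_Iio, if_pos hx,
          if_pos (show -c < -x by linarith)]
        ring_nf
      · simp only [Set.indicator_apply, Set.mem_Ioi, Set.mem_Iio, if_neg hx,
          if_neg (show ¬ -c < -x by intro h; exact hx (by linarith))]
    rw [h3] at h2
    have h4 : IntegrableOn (fun x => Real.exp (b*x)) (Iio c) := by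
      rwa [← integrable_indicator_iff measurableSet_Iio]
    exact h4.congr_set_ae Iio_ae_eq_Iic.symm |>.congr_set_ae (by rfl)
  · have h5 : ∫ x in Ioi (-c), Real.exp (b * (-x)) = ∫ x in Iic c, Real.exp (b*x) := by
      simpa using integral_comp_neg_Ioi (c := -c) (f := fun x => Real.exp (b*x))
    have h6 : ∫ x in Ioi (-c), Real.exp (b * (-x)) = Real.exp (b*c)/b := by
      have : (fun x => Real.exp (b * (-x))) = fun x => Real.exp (-(b*x)) := by
        funext x; ring_nf
      rw [this, hval]; ring_nf
    rw [← h5, h6]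

lemma key_le (lam : ℝ) (hlam : 0 < lam) {s t : ℝ} (hst : s ≤ t) :
    Integrable (fun x => lam * Real.exp (-2*lam * max |s - x| |t - x|)) ∧
    ∫ x, lam * Real.exp (-2*lam * max |s - x| |t - x|) = Real.exp (-lam * (t - s)) := by
  set F := fun x => lam * Real.exp (-2*lam * max |s - x| |t - x|) with hF
  set m := (s+t)/2 with hm
  have h2lam : (0:ℝ) < 2*lam := by linarith
  have hl : lam ≠ 0 := ne_of_gt hlam
  have hEqI : EqOn F (fun x => (lam * Real.exp (-(2*lam)*t)) * Real.exp ((2*lam)*x)) (Iic m) := by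
    intro x hx
    have hx' : x ≤ m := hx
    have h1 : |t - x| = t - x := abs_of_nonneg (by simp [hm] at hx'; linarith)
    have h2 : |s - x| ≤ t - x := abs_le.2 ⟨by simp [hm] at hx'; linarith, by linarith⟩
    simp only [hF]
    rw [h1, max_eq_right (h1 ▸ h2 : |s - x| ≤ t - x)]
    rw [show -2*lam*(t-x) = -(2*lam)*t + (2*lam)*x by ring, Real.exp_add]
    ring
  have hEqO : EqOn F (fun x => (lam * Real.exp ((2*lam)*s)) * Real.exp (-((2*lam)*x))) (Ioi m) := by
    intro x hx
    have hx' : m < x := hx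
    have h1 : |s - x| = x - s := by
      rw [abs_sub_comm]; exact abs_of_nonneg (by simp [hm] at hx'; linarith)
    have h2 : |t - x| ≤ x - s := abs_le.2 ⟨by linarith, by simp [hm] at hx'; linarith⟩
    simp only [hF]
    rw [h1, max_eq_left (h1 ▸ h2 : |t - x| ≤ x - s)]
    rw [show -2*lam*(x-s) = (2*lam)*s + -((2*lam)*x) by ring, Real.exp_add]
    ring
  have hintI : IntegrableOn F (Iic m) :=
    IntegrableOn.congr_fun ((expIic h2lam m).1.const_mul (lam * Real.exp (-(2*lam)*t)))
      hEqI.symm measurableSet_Iic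
  have hintO : IntegrableOn F (Ioi m) :=
    IntegrableOn.congr_fun ((expIoi h2lam m).1.const_mul (lam * Real.exp ((2*lam)*s)))
      hEqO.symm measurableSet_Ioi
  have hvalI : ∫ x in Iic m, F x = Real.exp (-lam*(t-s)) / 2 := by
    rw [setIntegral_congr_fun measurableSet_Iic hEqI, integral_const_mul, (expIic h2lam m).2]
    rw [show lam * Real.exp (-(2*lam)*t) * (Real.exp ((2*lam)*m) / (2*lam))
        = Real.exp (-(2*lam)*t) * Real.exp ((2*lam)*m) / 2 by field_simp,
      ← Real.exp_add]
    congr 1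
    simp [hm]; ring
  have hvalO : ∫ x in Ioi m, F x = Real.exp (-lam*(t-s)) / 2 := by
    rw [setIntegral_congr_fun measurableSet_Ioi hEqO, integral_const_mul, (expIoi h2lam m).2]
    rw [show lam * Real.exp ((2*lam)*s) * (Real.exp (-((2*lam)*m)) / (2*lam))
        = Real.exp ((2*lam)*s) * Real.exp (-((2*lam)*m)) / 2 by field_simp,
      ← Real.exp_add]
    congr 1
    simp [hm]; ring
  have hint : Integrable F := by
    rw [← integrableOn_univ, ← Iic_union_Ioi (a := m)]
    exact hintI.union hintO
  refine ⟨hint, ?_⟩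
  rw [← intervalIntegral.integral_Iic_add_Ioi hintI hintO, hvalI, hvalO]
  ring

lemma key (lam : ℝ) (hlam : 0 < lam) (s t : ℝ) :
    Integrable (fun x => lam * Real.exp (-2*lam * max |s - x| |t - x|)) ∧
    ∫ x, lam * Real.exp (-2*lam * max |s - x| |t - x|) = Real.exp (-lam * |s - t|) := by
  rcases le_total s t with h | h
  · have := key_le lam hlam h
    rwa [show |s - t| = t - s by rw [abs_sub_comm]; exact abs_of_nonneg (by linarith)]
  · have := key_le lam hlam h
    have hsw : (fun x => lam * Real.exp (-2*lam * max |t - x| |s - x|))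
        = fun x => lam * Real.exp (-2*lam * max |s - x| |t - x|) := by
      funext x; rw [max_comm]
    rw [hsw] at this
    rwa [show |s - t| = s - t from abs_of_nonneg (by linarith)]

lemma area (f : ℝ → ℝ) (hf : Continuous f) (hint : Integrable f) (hpos : ∀ x, 0 ≤ f x) :
    volume {p : ℝ × ℝ | 0 ≤ p.2 ∧ p.2 < f p.1} = ENNReal.ofReal (∫ x, f x) := by
  have hS : MeasurableSet {p : ℝ × ℝ | 0 ≤ p.2 ∧ p.2 < f p.1} :=
    (measurableSet_le measurable_const measurable_snd).inter
      (measurableSet_lt measurable_snd (hf.measurable.comp measurable_fst))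
  rw [show (volume : Measure (ℝ × ℝ)) = (volume : Measure ℝ).prod volume from
    Measure.volume_eq_prod ℝ ℝ, Measure.prod_apply hS]
  have hpre : ∀ x : ℝ, (Prod.mk x ⁻¹' {p : ℝ × ℝ | 0 ≤ p.2 ∧ p.2 < f p.1}) = Ico 0 (f x) := by
    intro x; ext y; simp [Set.mem_Ico]
  calc ∫⁻ x, volume (Prod.mk x ⁻¹' {p : ℝ × ℝ | 0 ≤ p.2 ∧ p.2 < f p.1})
      = ∫⁻ x, ENNReal.ofReal (f x) := by
        simp only [hpre, Real.volume_Ico, sub_zero]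
    _ = ENNReal.ofReal (∫ x, f x) :=
        (ofReal_integral_eq_lintegral_ofReal hint (Filter.Eventually.of_forall hpos)).symm

theorem random_measure_sets_area (lam : ℝ) (hlam : 0 < lam) (s t : ℝ) :
    let G : ℝ → Set (ℝ × ℝ) :=
      fun u => {p : ℝ × ℝ | 0 ≤ p.2 ∧ p.2 < lam * Real.exp (-2 * lam * |u - p.1|)}
    volume (G t) = 1 ∧
      volume (G s ∩ G t) = ENNReal.ofReal (Real.exp (-lam * |s - t|)) := by
  intro G
  have hcont : ∀ u : ℝ, Continuous (fun x => lam * Real.exp (-2 * lam * |u - x|)) := by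
    intro u; fun_prop
  have hmax : ∀ u : ℝ, (fun x => lam * Real.exp (-2*lam * max |u - x| |u - x|))
      = fun x => lam * Real.exp (-2 * lam * |u - x|) := by
    intro u; funext x; rw [max_self]
  constructor
  · have hk := key lam hlam t t
    rw [hmax t] at hk
    have := area _ (hcont t) hk.1 (fun x => by positivity)
    have hGt : G t = {p : ℝ × ℝ | 0 ≤ p.2 ∧ p.2 < lam * Real.exp (-2 * lam * |t - p.1|)} := rfl
    rw [hGt, this, hk.2]
    simp
  · have hk := key lam hlam s t
    have hmin : ∀ x : ℝ, min (lam * Real.exp (-2 * lam * |s - x|))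
        (lam * Real.exp (-2 * lam * |t - x|)) = lam * Real.exp (-2*lam * max |s - x| |t - x|) := by
      intro x
      rcases le_total |s - x| |t - x| with h | h
      · rw [max_eq_right h, min_eq_right]
        exact mul_le_mul_of_nonneg_left (Real.exp_le_exp.2 (by nlinarith)) hlam.le
      · rw [max_eq_left h, min_eq_left]
        exact mul_le_mul_of_nonneg_left (Real.exp_le_exp.2 (by nlinarith)) hlam.le
    have hset : G s ∩ G t
        = {p : ℝ × ℝ | 0 ≤ p.2 ∧ p.2 < lam * Real.exp (-2*lam * max |s - p.1| |t - p.1|)} := by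
      ext p
      simp only [G, Set.mem_inter_iff, Set.mem_setOf_eq, ← hmin p.1, lt_min_iff]
      tauto
    have hcont2 : Continuous (fun x => lam * Real.exp (-2*lam * max |s - x| |t - x|)) := by
      fun_prop
    rw [hset, area _ hcont2 hk.1 (fun x => by positivity), hk.2]
end

section
/- Let Y = Σⱼ uⱼ Xⱼ be a linear combination of independent Poisson random variables Xⱼ ~ Poisson(νⱼ) with Σⱼ min(1,|uⱼ|) νⱼ < ∞. Then Y is almost surely finite and its characteristic function is E e^{iθY} = exp( Σⱼ (e^{iθuⱼ} - 1) νⱼ ). -/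
open MeasureTheory ProbabilityTheory Complex

open scoped NNReal ENNReal Nat Topology

section Aux

lemma my_poissonPMF_apply (r : ℝ≥0) (n : ℕ) :
    poissonPMF r n = ENNReal.ofReal (poissonPMFReal r n) := rfl

lemma my_poisson_mean (r : ℝ≥0) : HasSum (fun n : ℕ => (n:ℝ) * poissonPMFReal r n) r := by
  have h0 : HasSum (fun n : ℕ => (r : ℝ) * poissonPMFReal r n) r := by
    simpa [poissonPMFReal] using (poissonPMFRealSum r).mul_left (r : ℝ)
  have hshift : ∀ n : ℕ, ((n+1 : ℕ) : ℝ) * poissonPMFReal r (n+1) = (r:ℝ) * poissonPMFReal r n := by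
    intro n
    unfold poissonPMFReal
    rw [Nat.factorial_succ]
    push_cast
    have hn : ((n:ℝ)+1) ≠ 0 := by positivity
    field_simp
    ring
  have h1 : HasSum (fun n : ℕ => ((n+1:ℕ):ℝ) * poissonPMFReal r (n+1)) r :=
    HasSum.congr_fun h0 (fun n => hshift n)
  have h2 := (hasSum_nat_add_iff (f := fun n : ℕ => (n:ℝ) * poissonPMFReal r n) 1).mp
    (by simpa using h1)
  simpa using h2

lemma my_poisson_lintegral_mul (r : ℝ≥0) (c : ℝ) (hc : 0 ≤ c) :
    ∫⁻ n : ℕ, ENNReal.ofReal (c * n) ∂(poissonMeasure r) = ENNReal.ofReal (c * r) := by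
  rw [lintegral_countable']
  have hsing : ∀ n : ℕ, (poissonMeasure r) {n} = ENNReal.ofReal (poissonPMFReal r n) := by
    intro n
    rw [poissonMeasure_singleton, poissonPMFReal]
  have hterm : ∀ n : ℕ, ENNReal.ofReal (c * n) * (poissonMeasure r) {n}
      = ENNReal.ofReal (c * (n * poissonPMFReal r n)) := by
    intro n
    rw [hsing, ← ENNReal.ofReal_mul (by positivity)]
    ring_nf
  rw [tsum_congr hterm, ← ENNReal.ofReal_tsum_of_nonneg
    (fun n => by have := poissonPMFReal_nonneg (r := r) (n := n); positivity)
    (((my_poisson_mean r).summable).mul_left c)]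
  congr 1
  rw [tsum_mul_left, (my_poisson_mean r).tsum_eq]

lemma my_poisson_integral_pow (r : ℝ≥0) (z : ℂ) (hz : ‖z‖ ≤ 1) :
    ∫ n : ℕ, z ^ n ∂(poissonMeasure r) = Complex.exp ((z - 1) * r) := by
  have hmeas : Measurable fun n : ℕ => z ^ n := measurable_from_nat
  have hint : Integrable (fun n : ℕ => z ^ n) (poissonMeasure r) := by
    refine Integrable.mono' (integrable_const 1) hmeas.aestronglyMeasurable ?_
    exact ae_of_all _ fun n => by simpa using pow_le_one₀ (norm_nonneg z) hz
  rw [integral_poissonMeasure' hint]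
  have key : ∀ n : ℕ, (Real.exp (-(r:ℝ)) * (r:ℝ) ^ n / (n ! : ℝ)) • z ^ n
      = Complex.exp (-(r:ℂ)) * (((r:ℂ) * z) ^ n / (n ! : ℂ)) := by
    intro n
    rw [real_smul]
    push_cast
    rw [mul_pow]
    ring
  rw [tsum_congr key, tsum_mul_left]
  have hexp : (∑' n : ℕ, ((r:ℂ) * z) ^ n / (n ! : ℂ)) = Complex.exp ((r:ℂ) * z) := by
    rw [Complex.exp_eq_exp_ℂ, NormedSpace.exp_eq_tsum_div]
  rw [hexp, ← Complex.exp_add]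
  ring_nf

lemma my_integral_exp_mul_add {Ω : Type*} [MeasurableSpace Ω] (P : Measure Ω)
    [IsProbabilityMeasure P]
    (S T : Ω → ℝ) (hS : Measurable S) (hT : Measurable T) (h : IndepFun S T P) (θ : ℝ) :
    ∫ w, Complex.exp (I * θ * ((S w : ℂ) + (T w : ℂ))) ∂P
      = (∫ w, Complex.exp (I * θ * (S w : ℂ)) ∂P) * (∫ w, Complex.exp (I * θ * (T w : ℂ)) ∂P) := by
  set g : ℝ → ℂ := fun x => Complex.exp (I * θ * (x : ℂ)) with hg
  have hgm : Measurable g :=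
    Complex.measurable_exp.comp (measurable_const.mul Complex.measurable_ofReal)
  rw [indepFun_iff_map_prod_eq_prod_map_map hS.aemeasurable hT.aemeasurable] at h
  have h1 : ∀ w, Complex.exp (I * θ * ((S w : ℂ) + (T w : ℂ))) = g (S w) * g (T w) := by
    intro w; simp only [hg, ← Complex.exp_add]; ring_nf
  calc ∫ w, Complex.exp (I * θ * ((S w : ℂ) + (T w : ℂ))) ∂P
      = ∫ w, g (S w) * g (T w) ∂P := by simp only [h1]
    _ = ∫ p : ℝ × ℝ, g p.1 * g p.2 ∂(P.map fun w => (S w, T w)) := by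
        have hm2 : Measurable fun p : ℝ × ℝ => g p.1 * g p.2 :=
          (hgm.comp measurable_fst).mul (hgm.comp measurable_snd)
        exact (integral_map (hS.prodMk hT).aemeasurable hm2.aestronglyMeasurable).symm
    _ = ∫ p : ℝ × ℝ, g p.1 * g p.2 ∂((P.map S).prod (P.map T)) := by rw [h]
    _ = (∫ x, g x ∂(P.map S)) * ∫ y, g y ∂(P.map T) := integral_prod_mul g g
    _ = _ := by
        rw [integral_map hS.aemeasurable hgm.aestronglyMeasurable,
          integral_map hT.aemeasurable hgm.aestronglyMeasurable]

lemma my_norm_exp_sub_one_le (t : ℝ) : ‖Complex.exp (t * I) - 1‖ ≤ 2 * min 1 |t| := by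
  rcases le_total |t| 1 with h | h
  · rw [min_eq_right h]
    have := Complex.norm_exp_sub_one_le (x := (t : ℂ) * I) (by simpa using h)
    simpa using this
  · rw [min_eq_left h]
    calc ‖Complex.exp (t * I) - 1‖ ≤ ‖Complex.exp ((t:ℂ) * I)‖ + ‖(1:ℂ)‖ := norm_sub_le _ _
    _ ≤ 2 * 1 := by rw [Complex.norm_exp_ofReal_mul_I]; norm_num

lemma my_min_mul_le (a b : ℝ) (ha : 0 ≤ a) (hb : 0 ≤ b) :
    min 1 (a * b) ≤ max 1 a * min 1 b := by
  rcases le_total b 1 with h | h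
  · rw [min_eq_right h]
    calc min 1 (a*b) ≤ a * b := min_le_right _ _
      _ ≤ max 1 a * b := by nlinarith [le_max_right (1:ℝ) a]
  · rw [min_eq_left h]
    calc min 1 (a*b) ≤ 1 := min_le_left _ _
      _ ≤ max 1 a * 1 := by simpa using le_max_left (1:ℝ) a

end Aux

theorem poisson_linear_combination_charFun
    {Ω : Type*} [MeasurableSpace Ω] (P : Measure Ω) [IsProbabilityMeasure P]
    (u : ℕ → ℝ) (ν : ℕ → NNReal)
    (X : ℕ → Ω → ℕ) (hX : ∀ j, Measurable (X j))
    (hindep : iIndepFun X P)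
    (hlaw : ∀ j, Measure.map (X j) P = poissonMeasure (ν j))
    (hsummable : Summable fun j => min 1 |u j| * (ν j : ℝ)) :
    (∀ᵐ w ∂P, Summable fun j => u j * (X j w : ℝ)) ∧
      ∀ θ : ℝ,
        (∫ w, Complex.exp (I * θ * (∑' j, u j * (X j w : ℝ))) ∂P) =
          Complex.exp (∑' j, (Complex.exp (I * θ * u j) - 1) * (ν j : ℝ)) := by
  classical
  set c : ℕ → ℝ := fun j => min 1 |u j| with hc
  have hc0 : ∀ j, 0 ≤ c j := fun j => le_min one_pos.le (abs_nonneg _)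
  have hXc : ∀ j, Measurable fun w => (X j w : ℝ) :=
    fun j => measurable_from_nat.comp (hX j)
  -- Part 1 : a.s. summability
  have hlint : ∀ j, ∫⁻ w, ENNReal.ofReal (c j * (X j w : ℝ)) ∂P
      = ENNReal.ofReal (c j * (ν j : ℝ)) := by
    intro j
    have hfm : Measurable fun n : ℕ => ENNReal.ofReal (c j * (n : ℝ)) := measurable_from_nat
    rw [← lintegral_map hfm (hX j), hlaw j, my_poisson_lintegral_mul _ _ (hc0 j)]
  have hmeas1 : ∀ j, Measurable fun w => ENNReal.ofReal (c j * (X j w : ℝ)) :=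
    fun j => ENNReal.measurable_ofReal.comp (measurable_const.mul (hXc j))
  have hfin : ∫⁻ w, ∑' j, ENNReal.ofReal (c j * (X j w : ℝ)) ∂P ≠ ∞ := by
    rw [lintegral_tsum (fun j => (hmeas1 j).aemeasurable)]
    rw [tsum_congr hlint, ← ENNReal.ofReal_tsum_of_nonneg
      (fun j => mul_nonneg (hc0 j) (ν j).coe_nonneg) hsummable]
    exact ENNReal.ofReal_ne_top
  have hae : ∀ᵐ w ∂P, ∑' j, ENNReal.ofReal (c j * (X j w : ℝ)) < ∞ :=
    ae_lt_top (Measurable.ennreal_tsum hmeas1) hfin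
  have hsum_ae : ∀ᵐ w ∂P, Summable fun j => u j * (X j w : ℝ) := by
    filter_upwards [hae] with w hw
    have h1 : Summable fun j => c j * (X j w : ℝ) := by
      have h2 := ENNReal.summable_toReal hw.ne
      refine h2.congr fun j => ?_
      rw [ENNReal.toReal_ofReal (by positivity)]
    -- the set of "bad" indices is finite
    have h3 : ∀ᶠ j in Filter.cofinite, c j * (X j w : ℝ) < 1 :=
      h1.tendsto_cofinite_zero.eventually (gt_mem_nhds one_pos)
    have hbadfin : {j | (1:ℝ) ≤ c j * (X j w : ℝ)}.Finite := by
      simpa using Filter.eventually_cofinite.mp h3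
    set h : ℕ → ℝ := fun j => if |u j| ≤ 1 then u j * (X j w : ℝ) else 0 with hh
    have hsumh : Summable h := by
      refine Summable.of_norm_bounded h1 fun j => ?_
      by_cases hj : |u j| ≤ 1
      · simp only [hh, if_pos hj, Real.norm_eq_abs, abs_mul, Nat.abs_cast]
        have : c j = |u j| := min_eq_right hj
        rw [this]
      · simp only [hh, if_neg hj, norm_zero]
        positivity
    have hdiff : Summable fun j => u j * (X j w : ℝ) - h j := by
      apply summable_of_finite_support
      refine hbadfin.subset ?_
      intro j hj
      simp only [Function.mem_support, hh] at hj
      by_cases hj1 : |u j| ≤ 1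
      · simp [if_pos hj1] at hj
      · push_neg at hj1
        have hX1 : X j w ≠ 0 := by
          intro h0
          simp [h0, if_neg (not_le.mpr hj1)] at hj
        have hX1' : (1:ℝ) ≤ (X j w : ℝ) := by exact_mod_cast Nat.one_le_iff_ne_zero.mpr hX1
        have hcj : c j = 1 := min_eq_left hj1.le
        simp only [Set.mem_setOf_eq, hcj, one_mul]
        exact hX1'
    have := hsumh.add hdiff
    refine this.congr fun j => ?_
    ring
  refine ⟨hsum_ae, fun θ => ?_⟩
  -- Part 2 : characteristic function
  set Z : ℕ → Ω → ℝ := fun j w => u j * (X j w : ℝ) with hZ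
  have hZm : ∀ j, Measurable (Z j) := fun j => measurable_const.mul (hXc j)
  have hZindep : iIndepFun Z P :=
    hindep.comp (fun j (n : ℕ) => u j * (n : ℝ))
      (fun j => measurable_from_nat)
  set a : ℕ → ℂ := fun j => (Complex.exp (I * θ * u j) - 1) * (ν j : ℝ) with ha
  have hsuma : Summable a := by
    refine Summable.of_norm_bounded (g := fun j => 2 * max 1 |θ| * (min 1 |u j| * (ν j : ℝ)))
      (hsummable.mul_left _) fun j => ?_
    have he : I * (θ:ℂ) * (u j : ℂ) = ((θ * u j : ℝ) : ℂ) * I := by push_cast; ring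
    have hb := my_norm_exp_sub_one_le (θ * u j)
    rw [← he] at hb
    have hmin := my_min_mul_le |θ| |u j| (abs_nonneg _) (abs_nonneg _)
    rw [← abs_mul] at hmin
    calc ‖a j‖ = ‖Complex.exp (I * θ * u j) - 1‖ * (ν j : ℝ) := by
          rw [ha]; simp [norm_mul, Complex.norm_real, _root_.abs_of_nonneg (ν j).coe_nonneg]
      _ ≤ (2 * min 1 |θ * u j|) * (ν j : ℝ) :=
          mul_le_mul_of_nonneg_right hb (ν j).coe_nonneg
      _ ≤ (2 * (max 1 |θ| * min 1 |u j|)) * (ν j : ℝ) := by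
          refine mul_le_mul_of_nonneg_right ?_ (ν j).coe_nonneg
          exact mul_le_mul_of_nonneg_left hmin (by norm_num)
      _ = 2 * max 1 |θ| * (min 1 |u j| * (ν j : ℝ)) := by ring
  -- characteristic function of each summand
  have hcharZ : ∀ j, ∫ w, Complex.exp (I * θ * (Z j w : ℂ)) ∂P = Complex.exp (a j) := by
    intro j
    set z : ℂ := Complex.exp (I * θ * (u j : ℂ)) with hz
    have hznorm : ‖z‖ ≤ 1 := by
      rw [hz, Complex.norm_exp]
      simp
    have hpow : ∀ n : ℕ, Complex.exp (I * θ * ((u j * n : ℝ) : ℂ)) = z ^ n := by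
      intro n
      rw [hz, ← Complex.exp_nat_mul]
      push_cast
      ring_nf
    calc ∫ w, Complex.exp (I * θ * (Z j w : ℂ)) ∂P
        = ∫ w, z ^ (X j w) ∂P := by
          refine integral_congr_ae (ae_of_all _ fun w => ?_)
          rw [hZ]; exact hpow (X j w)
      _ = ∫ n : ℕ, z ^ n ∂(Measure.map (X j) P) := by
          exact (integral_map (hX j).aemeasurable
            (measurable_from_nat (f := fun n : ℕ => z ^ n)).aestronglyMeasurable).symm
      _ = Complex.exp ((z - 1) * (ν j : ℝ)) := by
          rw [hlaw j, my_poisson_integral_pow _ _ hznorm]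
      _ = Complex.exp (a j) := by rw [ha, hz]
  -- partial sums
  have hcharS : ∀ n : ℕ,
      ∫ w, Complex.exp (I * θ * ((∑ j ∈ Finset.range n, Z j w : ℝ) : ℂ)) ∂P
        = Complex.exp (∑ j ∈ Finset.range n, a j) := by
    intro n
    induction n with
    | zero => simp
    | succ n ih =>
      have hSm : Measurable fun w => ∑ j ∈ Finset.range n, Z j w :=
        Finset.measurable_sum _ fun j _ => hZm j
      have hind : IndepFun (fun w => ∑ j ∈ Finset.range n, Z j w) (Z n) P := by
        have h0 := hZindep.indepFun_sum_range_succ hZm n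
        have heq : (∑ j ∈ Finset.range n, Z j) = fun w => ∑ j ∈ Finset.range n, Z j w := by
          ext w; simp [Finset.sum_apply]
        rwa [heq] at h0
      have step := my_integral_exp_mul_add P (fun w => ∑ j ∈ Finset.range n, Z j w) (Z n)
        hSm (hZm n) hind θ
      calc ∫ w, Complex.exp (I * θ * ((∑ j ∈ Finset.range (n+1), Z j w : ℝ) : ℂ)) ∂P
          = ∫ w, Complex.exp (I * θ *
              (((∑ j ∈ Finset.range n, Z j w : ℝ) : ℂ) + ((Z n w : ℝ) : ℂ))) ∂P := by
            refine integral_congr_ae (ae_of_all _ fun w => ?_)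
            simp only [Finset.sum_range_succ]
            push_cast
            ring_nf
        _ = (∫ w, Complex.exp (I * θ * ((∑ j ∈ Finset.range n, Z j w : ℝ) : ℂ)) ∂P)
            * ∫ w, Complex.exp (I * θ * ((Z n w : ℝ) : ℂ)) ∂P := step
        _ = Complex.exp (∑ j ∈ Finset.range n, a j) * Complex.exp (a n) := by
            rw [ih, hcharZ n]
        _ = Complex.exp (∑ j ∈ Finset.range (n+1), a j) := by
            rw [← Complex.exp_add, Finset.sum_range_succ]
  -- take limits
  have hlim1 : Filter.Tendsto
      (fun n => ∫ w, Complex.exp (I * θ * ((∑ j ∈ Finset.range n, Z j w : ℝ) : ℂ)) ∂P)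
      Filter.atTop (𝓝 (∫ w, Complex.exp (I * θ * (∑' j, u j * (X j w : ℝ))) ∂P)) := by
    refine tendsto_integral_of_dominated_convergence (fun _ => (1:ℝ)) ?_ (integrable_const 1)
      ?_ ?_
    · intro n
      have : Measurable fun w => Complex.exp (I * θ * ((∑ j ∈ Finset.range n, Z j w : ℝ) : ℂ)) :=
        Complex.measurable_exp.comp (measurable_const.mul
          (Complex.measurable_ofReal.comp (Finset.measurable_sum _ fun j _ => hZm j)))
      exact this.aestronglyMeasurable
    · intro n
      refine ae_of_all _ fun w => ?_
      rw [Complex.norm_exp]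
      simp
    · filter_upwards [hsum_ae] with w hw
      have htends : Filter.Tendsto (fun n => ∑ j ∈ Finset.range n, Z j w) Filter.atTop
          (𝓝 (∑' j, u j * (X j w : ℝ))) := hw.hasSum.tendsto_sum_nat
      have hcont : Continuous fun x : ℝ => Complex.exp (I * θ * (x : ℂ)) :=
        Complex.continuous_exp.comp (continuous_const.mul Complex.continuous_ofReal)
      exact (hcont.tendsto _).comp htends
  have hlim2 : Filter.Tendsto
      (fun n => ∫ w, Complex.exp (I * θ * ((∑ j ∈ Finset.range n, Z j w : ℝ) : ℂ)) ∂P)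
      Filter.atTop (𝓝 (Complex.exp (∑' j, a j))) := by
    rw [funext hcharS]
    exact (Complex.continuous_exp.tendsto _).comp hsuma.hasSum.tendsto_sum_nat
  exact tendsto_nhds_unique hlim1 hlim2
end
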